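/- Let K be a convex body in ℝ^d (a compact convex set with nonempty interior) and let ν be any measure on ℝ^d. Then the uniform asymptotic upper density of ν with respect to Lebesgue measure, defined via compact sets, equals the density of ν with respect to K: D̄(ν;|·|) = D̄_K(ν). -/

import Mathlib

open MeasureTheory Set Pointwise Filter ENNReal

/-- The uniform asymptotic upper density of a measure `ν` with respect to `μ`:
`inf` over nonempty compact sets `C` of `sup` over Borel sets `V` with compact
closure of `ν V / μ (C + V)`, where `C + V` is a Minkowski sum. -/
noncomputable def uaud {G : Type*} [AddCommGroup G] [TopologicalSpace G] [MeasurableSpace G]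
    (ν μ : Measure G) : ℝ≥0∞ :=
  ⨅ C ∈ {C : Set G | IsCompact C ∧ C.Nonempty},
    ⨆ V ∈ {V : Set G | MeasurableSet V ∧ IsCompact (closure V)},
      ν V / μ (C + V)

/-- The asymptotic upper density of `ν` with respect to a body `K` in `ℝ^d`:
`limsup_{r → ∞} sup_{x} ν (r K + x) / vol (r K)`. -/
noncomputable def densK {d : ℕ} (K : Set (EuclideanSpace ℝ (Fin d)))
    (ν : Measure (EuclideanSpace ℝ (Fin d))) : ℝ≥0∞ :=
  Filter.limsup
    (fun r : ℝ => ⨆ x : EuclideanSpace ℝ (Fin d), ν ({x} + r • K) / volume (r • K))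
    Filter.atTop

section Aux
variable {d : ℕ}

lemma avg_eq (ρ : Measure (EuclideanSpace ℝ (Fin d))) [IsFiniteMeasure ρ]
    (s : Set (EuclideanSpace ℝ (Fin d))) (hs : MeasurableSet s) :
    ∫⁻ x : EuclideanSpace ℝ (Fin d), ρ (x +ᵥ s) ∂volume = ρ univ * volume s := by
  have hind : ∀ x y : EuclideanSpace ℝ (Fin d),
      (x +ᵥ s).indicator (1 : EuclideanSpace ℝ (Fin d) → ℝ≥0∞) y = s.indicator 1 (y - x) := by
    intro x y
    have : y ∈ x +ᵥ s ↔ y - x ∈ s := by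
      rw [Set.mem_vadd_set_iff_neg_vadd_mem]
      simp [vadd_eq_add, neg_add_eq_sub]
    by_cases h : y - x ∈ s
    · rw [Set.indicator_of_mem (this.mpr h), Set.indicator_of_mem h]; rfl
    · rw [Set.indicator_of_notMem (fun hy => h (this.mp hy)), Set.indicator_of_notMem h]
  have hmeas : Measurable (fun p : EuclideanSpace ℝ (Fin d) × EuclideanSpace ℝ (Fin d) =>
      s.indicator (1 : EuclideanSpace ℝ (Fin d) → ℝ≥0∞) (p.2 - p.1)) :=
    (measurable_one.indicator hs).comp (measurable_snd.sub measurable_fst)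
  calc ∫⁻ x : EuclideanSpace ℝ (Fin d), ρ (x +ᵥ s) ∂volume
      = ∫⁻ x, ∫⁻ y, s.indicator 1 (y - x) ∂ρ ∂volume := by
        refine lintegral_congr fun x => ?_
        rw [← lintegral_indicator_one (hs.const_vadd x)]
        exact lintegral_congr fun y => (hind x y)
    _ = ∫⁻ y, ∫⁻ x, s.indicator 1 (y - x) ∂volume ∂ρ :=
        lintegral_lintegral_swap hmeas.aemeasurable
    _ = ∫⁻ y, volume s ∂ρ := by
        refine lintegral_congr fun y => ?_
        rw [(Measure.measurePreserving_sub_left volume y).lintegral_comp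
          (measurable_one.indicator hs)]
        exact lintegral_indicator_one hs
    _ = ρ univ * volume s := by rw [lintegral_const, mul_comm]

lemma keyB (ν : Measure (EuclideanSpace ℝ (Fin d))) (s V : Set (EuclideanSpace ℝ (Fin d)))
    (hscomp : IsCompact s) (hsint : (interior s).Nonempty) (hV : MeasurableSet V) (hVc : IsCompact (closure V)) :
    ν V * volume s ≤ (⨆ x : EuclideanSpace ℝ (Fin d), ν ({x} + s)) * volume ((-s) + V) := by
  set M := ⨆ x : EuclideanSpace ℝ (Fin d), ν ({x} + s) with hM
  have hsm : MeasurableSet s := hscomp.measurableSet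
  have htr : ∀ x : EuclideanSpace ℝ (Fin d), {x} + s = x +ᵥ s := fun x => by rw [Set.singleton_add]; rfl
  have hvolpos : 0 < volume s :=
    (isOpen_interior.measure_pos volume hsint).trans_le (measure_mono interior_subset)
  rcases eq_or_ne (ν V) ∞ with hfin | hfin
  · -- infinite case
    rcases (nonempty_of_measure_ne_zero (by rw [hfin]; exact ENNReal.top_ne_zero) : V.Nonempty)
      with ⟨v₀, hv₀⟩
    have hMtop : M = ∞ := by
      by_contra hne
      obtain ⟨z, hz⟩ := hsint
      obtain ⟨t, ht⟩ := hVc.elim_finite_subcover (fun y : EuclideanSpace ℝ (Fin d) => y +ᵥ interior s)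
        (fun y => isOpen_interior.vadd y) (fun y _ => Set.mem_iUnion.2
          ⟨y - z, z, hz, by show y - z + z = y; abel⟩)
      have hle : ν V ≤ ∑ y ∈ t, ν ({y} + s) := by
        refine le_trans (measure_mono ((subset_closure.trans ht).trans
          (Set.iUnion₂_mono fun y _ => ?_))) (measure_biUnion_finset_le t _)
        rw [htr y]
        exact Set.vadd_set_mono interior_subset
      have hlt : ∑ y ∈ t, ν ({y} + s) < ∞ := by
        refine ENNReal.sum_lt_top.mpr fun y _ => ?_
        exact lt_of_le_of_lt (le_iSup (fun x => ν ({x} + s)) y) (lt_top_iff_ne_top.mpr hne)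
      rw [hfin] at hle
      exact absurd (lt_of_le_of_lt hle hlt) (lt_irrefl _)
    have hpos : 0 < volume ((-s) + V) := by
      refine lt_of_lt_of_le ?_ (measure_mono (?_ : v₀ +ᵥ (-s) ⊆ (-s) + V))
      · rw [measure_vadd, Measure.measure_neg]; exact hvolpos
      · rintro y ⟨a, ha, rfl⟩
        exact ⟨a, ha, v₀, hv₀, add_comm a v₀⟩
    rw [hMtop, ENNReal.top_mul hpos.ne']
    exact le_top
  · -- finite case
    set ρ := ν.restrict V with hρ
    haveI : IsFiniteMeasure ρ := ⟨by rw [hρ, Measure.restrict_apply_univ]; exact hfin.lt_top⟩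
    have h1 : ν V * volume s = ∫⁻ x : EuclideanSpace ℝ (Fin d), ρ (x +ᵥ s) ∂volume := by
      rw [avg_eq ρ s hsm, Measure.restrict_apply_univ]
    rw [h1]
    have hbd : ∀ x : EuclideanSpace ℝ (Fin d),
        ρ (x +ᵥ s) ≤ ((-s) + V).indicator (fun _ => M) x := by
      intro x
      by_cases hx : x ∈ (-s) + V
      · rw [Set.indicator_of_mem hx]
        exact le_trans (Measure.restrict_le_self _) (htr x ▸ le_iSup (fun y => ν ({y} + s)) x)
      · rw [Set.indicator_of_notMem hx, hρ, Measure.restrict_apply (hsm.const_vadd x)]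
        have hemp : (x +ᵥ s) ∩ V = ∅ := by
          ext y
          simp only [Set.mem_inter_iff, Set.mem_empty_iff_false, iff_false, not_and]
          rintro ⟨a, ha, rfl⟩ hyV
          refine hx ⟨-a, Set.neg_mem_neg.mpr ha, x +ᵥ a, hyV, ?_⟩
          simp only [vadd_eq_add]
          rw [add_comm x a, neg_add_cancel_left]
        rw [hemp, measure_empty]
    calc ∫⁻ x : EuclideanSpace ℝ (Fin d), ρ (x +ᵥ s) ∂volume
        ≤ ∫⁻ x, ((-s) + V).indicator (fun _ => M) x ∂volume := lintegral_mono hbd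
      _ ≤ M * volume ((-s) + V) := lintegral_indicator_const_le _ _

lemma dir1_step (K : Set (EuclideanSpace ℝ (Fin d))) (hKcomp : IsCompact K)
    (hKint : (interior K).Nonempty) (ν : Measure (EuclideanSpace ℝ (Fin d)))
    {r : ℝ} (hr : 0 < r) :
    uaud ν volume ≤ ⨆ x : EuclideanSpace ℝ (Fin d), ν ({x} + r • K) / volume (r • K) := by
  set s := r • K with hs
  have hscomp : IsCompact s := hKcomp.smul r
  have hsint : (interior s).Nonempty := by
    rw [hs, interior_smul₀ hr.ne' K]
    exact hKint.smul_set
  have hsne : s.Nonempty := hsint.mono interior_subset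
  have hvs0 : volume s ≠ 0 :=
    ((isOpen_interior.measure_pos volume hsint).trans_le (measure_mono interior_subset)).ne'
  have hvst : volume s ≠ ∞ := hscomp.measure_lt_top.ne
  rw [← ENNReal.iSup_div]
  set M := ⨆ x : EuclideanSpace ℝ (Fin d), ν ({x} + s) with hMdef
  refine le_trans (iInf₂_le (-s) ⟨hscomp.neg, hsne.neg⟩) (iSup₂_le fun V hVm => ?_)
  have key := keyB ν s V hscomp hsint hVm.1 hVm.2
  rcases eq_or_ne (volume ((-s) + V)) 0 with hb | hb
  · have hνV : ν V = 0 := by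
      rw [hb, mul_zero, nonpos_iff_eq_zero, mul_eq_zero] at key
      exact key.resolve_right hvs0
    rw [hνV, ENNReal.zero_div]
    exact zero_le
  · have hbt : volume ((-s) + V) ≠ ∞ :=
      ((measure_mono (Set.add_subset_add_left subset_closure)).trans_lt
        (hscomp.neg.add hVm.2).measure_lt_top).ne
    rw [ENNReal.div_le_iff hb hbt, div_eq_mul_inv, mul_right_comm, ← div_eq_mul_inv,
      ENNReal.le_div_iff_mul_le (Or.inl hvs0) (Or.inl hvst)]
    exact key


lemma dir1 (K : Set (EuclideanSpace ℝ (Fin d))) (hKcomp : IsCompact K)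
    (hKint : (interior K).Nonempty) (ν : Measure (EuclideanSpace ℝ (Fin d))) :
    uaud ν volume ≤ Filter.limsup
      (fun r : ℝ => ⨆ x : EuclideanSpace ℝ (Fin d), ν ({x} + r • K) / volume (r • K))
      Filter.atTop := by
  refine Filter.le_limsup_of_frequently_le ?_ ⟨⊤, Filter.Eventually.of_forall fun _ => le_top⟩
  exact ((Filter.eventually_gt_atTop 0).mono fun r hr =>
    dir1_step K hKcomp hKint ν hr).frequently

lemma dir2 (K : Set (EuclideanSpace ℝ (Fin d))) (hKcomp : IsCompact K) (hKconv : Convex ℝ K)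
    (hKint : (interior K).Nonempty) (ν : Measure (EuclideanSpace ℝ (Fin d))) :
    Filter.limsup
      (fun r : ℝ => ⨆ x : EuclideanSpace ℝ (Fin d), ν ({x} + r • K) / volume (r • K))
      Filter.atTop ≤ uaud ν volume := by
  rw [uaud]
  refine le_iInf₂ fun C hC => ?_
  set S := ⨆ V ∈ {V : Set (EuclideanSpace ℝ (Fin d)) | MeasurableSet V ∧ IsCompact (closure V)},
    ν V / volume (C + V) with hSdef
  rcases eq_or_ne S ∞ with hStop | hStop
  · rw [hStop]; exact le_top
  have hvK0 : volume K ≠ 0 :=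
    ((isOpen_interior.measure_pos volume hKint).trans_le (measure_mono interior_subset)).ne'
  have hvKt : volume K ≠ ∞ := hKcomp.measure_lt_top.ne
  obtain ⟨z, hz⟩ := hKint
  obtain ⟨δ, hδ, hball⟩ := Metric.isOpen_iff.mp isOpen_interior z hz
  obtain ⟨R, hR⟩ := (Metric.isBounded_iff_subset_closedBall 0).mp hC.1.isBounded
  set c : ℝ := (|R| + 1) / δ with hc
  have hcpos : 0 < c := by positivity
  have hCsub : C ⊆ {-(c • z)} + c • K := by
    intro p hp
    refine ⟨-(c • z), rfl, c • (z + c⁻¹ • p),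
      smul_mem_smul_set (interior_subset (hball ?_)), ?_⟩
    · rw [Metric.mem_ball, dist_eq_norm, add_sub_cancel_left, norm_smul, norm_inv,
        Real.norm_eq_abs, abs_of_pos hcpos]
      have hpR : ‖p‖ ≤ |R| :=
        le_trans (by simpa [dist_zero_right] using hR hp) (le_abs_self R)
      have : c⁻¹ * ‖p‖ < c⁻¹ * (|R| + 1) := by
        apply mul_lt_mul_of_pos_left (lt_of_le_of_lt hpR (by linarith)) (by positivity)
      refine this.trans_le (le_of_eq ?_)
      rw [hc]
      field_simp
    · rw [smul_add, smul_inv_smul₀ hcpos.ne']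
      exact neg_add_cancel_left _ _
  have hbound : ∀ r : ℝ, 0 < r →
      (⨆ x : EuclideanSpace ℝ (Fin d), ν ({x} + r • K) / volume (r • K))
        ≤ S * ENNReal.ofReal ((1 + c / r) ^ d) := by
    intro r hr
    have hrKcomp : IsCompact (r • K) := hKcomp.smul r
    have hsrint : (interior (r • K)).Nonempty := by
      rw [interior_smul₀ hr.ne']; exact ⟨_, smul_mem_smul_set hz⟩
    have hvr0 : volume (r • K) ≠ 0 :=
      ((isOpen_interior.measure_pos volume hsrint).trans_le (measure_mono interior_subset)).ne'
    have hvrt : volume (r • K) ≠ ∞ := hrKcomp.measure_lt_top.ne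
    refine iSup_le fun x => ?_
    have hVcomp : IsCompact ({x} + r • K) := by
      rw [Set.singleton_add]
      exact hrKcomp.image (continuous_add_left x)
    have hVmem : ({x} + r • K) ∈ {V : Set (EuclideanSpace ℝ (Fin d)) |
        MeasurableSet V ∧ IsCompact (closure V)} :=
      ⟨hVcomp.measurableSet, by rwa [hVcomp.isClosed.closure_eq]⟩
    have hpos : volume (C + ({x} + r • K)) ≠ 0 := by
      obtain ⟨p₀, hp₀⟩ := hC.2
      refine ne_of_gt (lt_of_lt_of_le ?_
        (measure_mono (?_ : p₀ +ᵥ ({x} + r • K) ⊆ C + ({x} + r • K))))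
      · have heq : {x} + r • K = x +ᵥ r • K := by rw [Set.singleton_add]; rfl
        rw [measure_vadd, heq, measure_vadd]
        exact (isOpen_interior.measure_pos volume hsrint).trans_le
          (measure_mono interior_subset)
      · rintro y ⟨w, hw, rfl⟩
        exact ⟨p₀, hp₀, w, hw, rfl⟩
    have hfin : volume (C + ({x} + r • K)) ≠ ∞ := (hC.1.add hVcomp).measure_lt_top.ne
    have h1 : ν ({x} + r • K) ≤ S * volume (C + ({x} + r • K)) := by
      have hle : ν ({x} + r • K) / volume (C + ({x} + r • K)) ≤ S :=
        le_iSup₂ (f := fun V (_ : V ∈ {V : Set (EuclideanSpace ℝ (Fin d)) |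
          MeasurableSet V ∧ IsCompact (closure V)}) => ν V / volume (C + V)) _ hVmem
      rwa [ENNReal.div_le_iff hpos hfin] at hle
    have h2 : volume (C + ({x} + r • K)) ≤ ENNReal.ofReal ((c + r) ^ d) * volume K := by
      calc volume (C + ({x} + r • K))
          ≤ volume (({-(c • z)} + c • K) + ({x} + r • K)) :=
            measure_mono (Set.add_subset_add_right hCsub)
        _ = volume (({-(c • z)} + {x}) + (c • K + r • K)) := by rw [add_add_add_comm]
        _ = volume ((-(c • z) + x) +ᵥ ((c + r) • K)) := by
            rw [← hKconv.add_smul hcpos.le hr.le, Set.singleton_add_singleton,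
              Set.singleton_add]
            rfl
        _ = volume ((c + r) • K) := measure_vadd _ _ _
        _ = ENNReal.ofReal ((c + r) ^ d) * volume K := by
            rw [Measure.addHaar_smul_of_nonneg _ (by positivity : (0:ℝ) ≤ c + r),
              finrank_euclideanSpace_fin]
    have h3 : volume (r • K) = ENNReal.ofReal (r ^ d) * volume K := by
      rw [Measure.addHaar_smul_of_nonneg _ hr.le, finrank_euclideanSpace_fin]
    calc ν ({x} + r • K) / volume (r • K)
        ≤ S * (ENNReal.ofReal ((c + r) ^ d) * volume K) / volume (r • K) :=
          ENNReal.div_le_div_right (h1.trans (mul_le_mul_right h2 S)) _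
      _ = S * ((ENNReal.ofReal ((c + r) ^ d) * volume K) / (ENNReal.ofReal (r ^ d) * volume K)) := by
          rw [h3, mul_div_assoc]
      _ = S * ENNReal.ofReal ((1 + c / r) ^ d) := by
          rw [ENNReal.mul_div_mul_right _ _ hvK0 hvKt,
            ← ENNReal.ofReal_div_of_pos (by positivity), ← div_pow, add_div,
            div_self hr.ne', add_comm (c / r)]
  have htends : Filter.Tendsto (fun r : ℝ => ENNReal.ofReal ((1 + c / r) ^ d))
      Filter.atTop (nhds 1) := by
    have hdiv : Filter.Tendsto (fun r : ℝ => c / r) Filter.atTop (nhds 0) :=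
      Filter.Tendsto.div_atTop tendsto_const_nhds Filter.tendsto_id
    have h0 : Filter.Tendsto (fun r : ℝ => 1 + c / r) Filter.atTop (nhds 1) := by
      simpa using tendsto_const_nhds.add hdiv
    have h1 : Filter.Tendsto (fun r : ℝ => (1 + c / r) ^ d) Filter.atTop (nhds 1) := by
      simpa using h0.pow d
    simpa [ENNReal.ofReal_one] using ENNReal.tendsto_ofReal h1
  refine (Filter.limsup_le_limsup
      ((Filter.eventually_gt_atTop (0:ℝ)).mono fun r hr => hbound r hr)).trans ?_
  rw [ENNReal.limsup_const_mul_of_ne_top hStop, htends.limsup_eq, mul_one]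

end Aux

theorem uaud_eq_densK {d : ℕ} (K : Set (EuclideanSpace ℝ (Fin d)))
    (hKcomp : IsCompact K) (hKconv : Convex ℝ K) (hKint : (interior K).Nonempty)
    (ν : Measure (EuclideanSpace ℝ (Fin d))) :
    uaud ν volume = densK K ν := by
  refine le_antisymm (dir1 K hKcomp hKint ν) (dir2 K hKcomp hKconv hKint ν)
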